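/- With the square root embedding Ψ = Ψ_v of a positively edge-weighted tree T into ℝ^{m-1}, for any nodes v_1, v_2 of T, the squared Euclidean norm ‖Ψ(v_1) - Ψ(v_2)‖² equals the tree distance d(v_1,v_2) = Σ_{e ∈ P_{v_1,v_2}} w(e). Equivalently, ‖Ψ(v_1) - Ψ(v_2)‖ = √(d(v_1,v_2)). -/

import Mathlib

open SimpleGraph

/-- The unique path between two vertices of a tree, as a walk. -/
noncomputable def treePath {V : Type*} (G : SimpleGraph V) (hG : G.IsTree) (a b : V) :
    G.Walk a b :=
  (hG.existsUnique_path a b).choose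

section aux
variable {V : Type*} [DecidableEq V] {G : SimpleGraph V}

lemma treePath_isPath (hG : G.IsTree) (a b : V) : (treePath G hG a b).IsPath :=
  (hG.existsUnique_path a b).choose_spec.1

lemma treePath_unique (hG : G.IsTree) {a b : V} (p : G.Walk a b) (hp : p.IsPath) :
    p = treePath G hG a b :=
  (hG.existsUnique_path a b).choose_spec.2 p hp

lemma treePath_self (hG : G.IsTree) (a : V) : treePath G hG a a = Walk.nil :=
  (treePath_unique hG Walk.nil Walk.IsPath.nil).symm

lemma path_cons_parity (hG : G.IsTree) {x z y : V} (h : G.Adj x z) (e : Sym2 V) :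
    ((treePath G hG x y).edges.count e) % 2
      = ((s(x, z) :: (treePath G hG z y).edges).count e) % 2 := by
  set q := treePath G hG z y with hq
  have hqp : q.IsPath := treePath_isPath hG z y
  by_cases hx : x ∈ q.support
  · have hsplit := q.take_spec hx
    have htake : q.takeUntil x hx = treePath G hG z x :=
      treePath_unique hG _ (hqp.takeUntil hx)
    have hdrop : q.dropUntil x hx = treePath G hG x y :=
      treePath_unique hG _ (hqp.dropUntil hx)
    have hsingle : (Walk.cons h.symm Walk.nil : G.Walk z x) = treePath G hG z x := by
      refine treePath_unique hG _ ?_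
      simp [Walk.isPath_def, h.ne']
    have hedges : q.edges = s(x, z) :: (treePath G hG x y).edges := by
      rw [← hsplit, Walk.edges_append, htake, ← hsingle, hdrop]
      simp [Sym2.eq_swap]
    rw [hedges]
    simp only [List.count_cons]
    omega
  · have hpath : (Walk.cons h q).IsPath := hqp.cons hx
    rw [← treePath_unique hG _ hpath]
    simp

lemma walk_parity (hG : G.IsTree) {x y : V} (p : G.Walk x y) (e : Sym2 V) :
    (p.edges.count e) % 2 = ((treePath G hG x y).edges.count e) % 2 := by
  induction p with
  | nil => rw [treePath_self]
  | cons h p ih =>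
    rename_i a b c
    rw [path_cons_parity hG h e]
    simp only [Walk.edges_cons, List.count_cons]
    omega

lemma mem_treePath_iff (hG : G.IsTree) (v v₁ v₂ : V) (e : Sym2 V) :
    e ∈ (treePath G hG v₁ v₂).edges ↔
      ¬ ((e ∈ (treePath G hG v v₁).edges) ↔ (e ∈ (treePath G hG v v₂).edges)) := by
  classical
  have hW := walk_parity hG ((treePath G hG v v₁).reverse.append (treePath G hG v v₂)) e
  rw [Walk.edges_append, List.count_append, Walk.edges_reverse, List.count_reverse] at hW
  have c₁ := List.Nodup.count (l := (treePath G hG v v₁).edges) (a := e) (treePath_isPath hG v v₁).edges_nodup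
  have c₂ := List.Nodup.count (l := (treePath G hG v v₂).edges) (a := e) (treePath_isPath hG v v₂).edges_nodup
  have cq := List.Nodup.count (l := (treePath G hG v₁ v₂).edges) (a := e) (treePath_isPath hG v₁ v₂).edges_nodup
  by_cases h1 : e ∈ (treePath G hG v v₁).edges <;>
    by_cases h2 : e ∈ (treePath G hG v v₂).edges <;>
    by_cases hq : e ∈ (treePath G hG v₁ v₂).edges <;>
      simp [h1, h2, hq] at c₁ c₂ cq hW ⊢ <;> omega

end aux

/-- The square root embedding with base node `v`: the coordinate of `Ψ_v u` at edge `e`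
is `√(w e)` if `e` lies on the path from `v` to `u`, and `0` otherwise. -/
noncomputable def sqrtEmbed {V : Type*} [DecidableEq V] (G : SimpleGraph V) (hG : G.IsTree)
    [Fintype G.edgeSet] (w : Sym2 V → ℝ) (v u : V) : EuclideanSpace ℝ G.edgeSet :=
  WithLp.toLp 2 (fun (e : G.edgeSet) => if (e : Sym2 V) ∈ (treePath G hG v u).edges then Real.sqrt (w e) else 0)

/-- The tree metric: sum of the weights of the edges on the unique path. -/
noncomputable def treeDist {V : Type*} (G : SimpleGraph V) (hG : G.IsTree)
    (w : Sym2 V → ℝ) (a b : V) : ℝ :=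
  ((treePath G hG a b).edges.map w).sum

/-- the squared Euclidean distance between embedded nodes is the tree distance,
equivalently the distance is the square root of the tree distance. -/
theorem sqrtEmbed_dist_sq {V : Type*} [DecidableEq V] (G : SimpleGraph V) (hG : G.IsTree)
    [Fintype G.edgeSet] (w : Sym2 V → ℝ) (hw : ∀ e ∈ G.edgeSet, 0 < w e)
    (v v₁ v₂ : V) :
    ‖sqrtEmbed G hG w v v₁ - sqrtEmbed G hG w v v₂‖ ^ 2 = treeDist G hG w v₁ v₂ ∧
    ‖sqrtEmbed G hG w v v₁ - sqrtEmbed G hG w v v₂‖ = Real.sqrt (treeDist G hG w v₁ v₂) := by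
  classical
  set x := sqrtEmbed G hG w v v₁ - sqrtEmbed G hG w v v₂ with hx
  have hsq : ‖x‖ ^ 2 = ∑ e : G.edgeSet, (x e) ^ 2 := by
    rw [EuclideanSpace.norm_eq, Real.sq_sqrt (by positivity)]
    simp [Real.norm_eq_abs, sq_abs]
  have hterm : ∀ e : G.edgeSet,
      (x e) ^ 2 = if (e : Sym2 V) ∈ (treePath G hG v₁ v₂).edges then w e else 0 := by
    intro e
    have hwe : (0:ℝ) ≤ w e := (hw e e.2).le
    have hmem := mem_treePath_iff hG v v₁ v₂ (e : Sym2 V)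
    have hxe : x e = (if (e : Sym2 V) ∈ (treePath G hG v v₁).edges then Real.sqrt (w e) else 0)
        - (if (e : Sym2 V) ∈ (treePath G hG v v₂).edges then Real.sqrt (w e) else 0) := by
      simp [hx, sqrtEmbed]
    by_cases h1 : (e : Sym2 V) ∈ (treePath G hG v v₁).edges <;>
      by_cases h2 : (e : Sym2 V) ∈ (treePath G hG v v₂).edges <;>
      simp [h1, h2, iff_iff_implies_and_implies] at hmem <;>
      simp [hxe, h1, h2, hmem, Real.sq_sqrt hwe, neg_pow, neg_sq]
  have hsum : ∑ e : G.edgeSet, (if (e : Sym2 V) ∈ (treePath G hG v₁ v₂).edges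
        then w e else 0) = treeDist G hG w v₁ v₂ := by
    rw [← Finset.sum_subtype G.edgeFinset (by simp [mem_edgeFinset])
      (fun e => if e ∈ (treePath G hG v₁ v₂).edges then w e else 0), ← Finset.sum_filter]
    have hfil : G.edgeFinset.filter (· ∈ (treePath G hG v₁ v₂).edges)
        = (treePath G hG v₁ v₂).edges.toFinset := by
      ext a
      simp only [Finset.mem_filter, mem_edgeFinset, List.mem_toFinset, and_iff_right_iff_imp]
      exact fun ha => Walk.edges_subset_edgeSet _ ha
    rw [hfil, List.sum_toFinset w (treePath_isPath hG v₁ v₂).edges_nodup, treeDist]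
  have h1 : ‖x‖ ^ 2 = treeDist G hG w v₁ v₂ := by
    rw [hsq, Finset.sum_congr rfl (fun e _ => hterm e), hsum]
  exact ⟨h1, by rw [← h1, Real.sqrt_sq (norm_nonneg _)]⟩
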